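/- Let G be a locally compact group and X a compact G-space such that the stabilizer map x ↦ G_x ∈ Sub(G) is continuous (Chabauty topology), with a continuous field of Haar measures {μ_y}: for each f ∈ C_c(G), y ↦ ∫_{G_y} f dμ_y is continuous. Then the map τ: {(g,y) ∈ G × X : g·y = y} → ℝ defined by τ(g,y) = Δ_{G_y}(g)^{-1/2} is continuous, where Δ_{G_y} is the modular function of the stabilizer G_y. -/

import Mathlib

open MeasureTheory

/-- Let `G` be a totally disconnected locally compact group acting on a
compact space `X` with continuous stabilizer map and a continuous field of Haar measures
`{μ_y}` on the stabilizers (for each `f ∈ C_c(G)`, `y ↦ ∫_{G_y} f dμ_y` is continuous).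
Then `τ(g, y) = Δ_{G_y}(g)^{-1/2}` is continuous on `{(g,y) : g • y = y}`, where
`Δ_{G_y}` is the modular function of the stabilizer `G_y`. -/
theorem stmt9 {G X : Type*} [Group G] [TopologicalSpace G] [IsTopologicalGroup G]
    [LocallyCompactSpace G] [TotallyDisconnectedSpace G]
    [MeasurableSpace G] [BorelSpace G]
    [TopologicalSpace X] [CompactSpace X] [T2Space X]
    [MulAction G X] [ContinuousSMul G X]
    -- the field of left Haar measures on the stabilizers
    (μ : X → Measure G)
    (hsupp : ∀ y, μ y {g : G | g • y ≠ y} = 0)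
    (hinv : ∀ (y : X) (h : G), h • y = y → Measure.map (fun g => h * g) (μ y) = μ y)
    (hpos : ∀ (y : X) (U : Set G), IsOpen U → (∃ g ∈ U, g • y = y) → 0 < μ y U)
    (hfin : ∀ (y : X) (C : Set G), IsCompact C → μ y C < ⊤)
    -- continuity of the field of measures (continuous stabilizer map)
    (hcont : ∀ f : G → ℝ, Continuous f → HasCompactSupport f →
      Continuous fun y => ∫ g, f g ∂μ y)
    -- the modular functions of the stabilizers
    (Δ : G → X → ℝ) (hΔpos : ∀ (h : G) (y : X), h • y = y → 0 < Δ h y)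
    (hΔ : ∀ (y : X) (h : G), h • y = y → ∀ s : Set G, MeasurableSet s →
      μ y ((fun g => g * h) '' s) = ENNReal.ofReal (Δ h y) * μ y s) :
    Continuous fun p : {p : G × X // p.1 • p.2 = p.2} =>
      (Δ p.1.1 p.1.2) ^ (-(1 / 2) : ℝ) := by
  -- Hausdorffness of `G`
  have hT1 : T1Space G := ⟨fun x => by
    have : connectedComponent x = {x} :=
      totallyDisconnectedSpace_iff_connectedComponent_singleton.mp ‹_› x
    rw [← this]; exact isClosed_connectedComponent⟩
  haveI : T2Space G := IsTopologicalGroup.t2Space_iff_one_closed.mpr isClosed_singleton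
  -- a compact open set `K` containing `1`
  obtain ⟨C, hCcomp, hCmem⟩ := exists_compact_mem_nhds (1 : G)
  obtain ⟨K, hKclopen, h1K, hKC⟩ :=
    (loc_compact_Haus_tot_disc_of_zero_dim (H := G)).mem_nhds_iff.mp hCmem
  have hKcomp : IsCompact K := hCcomp.of_isClosed_subset hKclopen.isClosed hKC
  -- a symmetric open neighborhood `S` of `1` with `K * S ⊆ K`
  obtain ⟨V, hVmem, hKV⟩ :=
    compact_open_separated_mul_right hKcomp hKclopen.isOpen (subset_refl K)
  obtain ⟨W, hWV, hWopen, h1W⟩ := mem_nhds_iff.mp hVmem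
  set S : Set G := W ∩ W⁻¹ with hS
  have hSopen : IsOpen S := hWopen.inter hWopen.inv
  have h1S : (1 : G) ∈ S := ⟨h1W, by simpa using h1W⟩
  have hSsymm : ∀ s ∈ S, s⁻¹ ∈ S := fun s hs => ⟨hs.2, by simpa using hs.1⟩
  have hKS : ∀ s ∈ S, ∀ k ∈ K, k * s ∈ K := fun s hs k hk =>
    hKV (Set.mul_mem_mul hk (hWV hs.1))
  -- local constancy of right cosets :  `K * g = K * g₀` for `g ∈ S * g₀`
  have hcoset : ∀ g₀ : G, ∀ s ∈ S, (fun g => g * (s * g₀)) '' K = (fun g => g * g₀) '' K := by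
    intro g₀ s hs
    apply Set.Subset.antisymm
    · rintro _ ⟨k, hk, rfl⟩
      exact ⟨k * s, hKS s hs k hk, by group⟩
    · rintro _ ⟨k, hk, rfl⟩
      exact ⟨k * s⁻¹, hKS s⁻¹ (hSsymm s hs) k hk, by group⟩
  -- basic facts about measures of compact open sets
  have himg : ∀ g₀ : G, (fun g => g * g₀) '' K = (fun g => g * g₀⁻¹) ⁻¹' K := by
    intro g₀; ext x
    constructor
    · rintro ⟨k, hk, rfl⟩; simpa using hk
    · intro hx; exact ⟨x * g₀⁻¹, hx, by group⟩
  have hKgclopen : ∀ g₀ : G, IsClopen ((fun g => g * g₀) '' K) := by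
    intro g₀; rw [himg g₀]
    exact hKclopen.preimage (continuous_mul_right g₀⁻¹)
  have hmeasK : ∀ g₀ : G, MeasurableSet ((fun g => g * g₀) '' K) :=
    fun g₀ => (hKgclopen g₀).isOpen.measurableSet
  have hKposfin : ∀ y, 0 < μ y K ∧ μ y K < ⊤ := fun y =>
    ⟨hpos y K hKclopen.isOpen ⟨1, h1K, one_smul _ _⟩, hfin y K hKcomp⟩
  -- continuity of `y ↦ (μ y (K g₀)).toReal` for fixed `g₀`
  have hmeascont : ∀ g₀ : G, Continuous fun y => (μ y ((fun g => g * g₀) '' K)).toReal := by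
    intro g₀
    have hKg₀clopen : IsClopen ((fun g => g * g₀) '' K) := hKgclopen g₀
    have hKg₀comp : IsCompact ((fun g => g * g₀) '' K) :=
      hKcomp.image (continuous_mul_right g₀)
    set f : G → ℝ := Set.indicator ((fun g => g * g₀) '' K) 1 with hf
    have hfcont : Continuous f := by
      rw [hf]
      refine continuous_indicator (fun x hx => ?_) continuous_one.continuousOn
      rw [hKg₀clopen.frontier_eq] at hx
      exact absurd hx (Set.notMem_empty x)
    have hfsupp : HasCompactSupport f :=
      HasCompactSupport.intro hKg₀comp fun x hx => Set.indicator_of_notMem hx 1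
    have := hcont f hfcont hfsupp
    convert this using 2 with y
    rw [hf, integral_indicator_one (hmeasK g₀)]; rfl
  -- the auxiliary continuous function
  set F : G × X → ℝ := fun p => (μ p.2 ((fun g => g * p.1) '' K)).toReal / (μ p.2 K).toReal
    with hF
  have hFcont : Continuous F := by
    rw [continuous_iff_continuousAt]
    rintro ⟨g₀, y₀⟩
    have hnbhd : ((fun g => g * g₀⁻¹) ⁻¹' S) ×ˢ (Set.univ : Set X) ∈ nhds (g₀, y₀) := by
      refine prod_mem_nhds ?_ Filter.univ_mem
      exact (hSopen.preimage (continuous_mul_right g₀⁻¹)).mem_nhds (by simpa using h1S)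
    have heq : ∀ p ∈ ((fun g => g * g₀⁻¹) ⁻¹' S) ×ˢ (Set.univ : Set X),
        F p = (μ p.2 ((fun g => g * g₀) '' K)).toReal / (μ p.2 K).toReal := by
      rintro ⟨g, y⟩ ⟨hg, -⟩
      simp only [hF]
      have hgdecomp : g = (g * g₀⁻¹) * g₀ := by group
      rw [hgdecomp, hcoset g₀ (g * g₀⁻¹) hg]
    have hcont' : Continuous fun p : G × X =>
        (μ p.2 ((fun g => g * g₀) '' K)).toReal / (μ p.2 K).toReal := by
      have hKcont : Continuous fun y => (μ y K).toReal := by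
        have := hmeascont 1
        simpa using this
      exact (((hmeascont g₀).comp continuous_snd).div (hKcont.comp continuous_snd)
        fun p => (ENNReal.toReal_pos (hKposfin p.2).1.ne' (hKposfin p.2).2.ne).ne')
    exact ContinuousAt.congr_of_eventuallyEq hcont'.continuousAt
      (Filter.eventuallyEq_of_mem hnbhd heq)
  -- `Δ` agrees with `F` on the stabilizer set
  have hΔF : ∀ (g : G) (y : X), g • y = y → Δ g y = F (g, y) := by
    intro g y hgy
    have h1 := hΔ y g hgy K hKclopen.isOpen.measurableSet
    have hKpos := (hKposfin y).1
    have hKfin := (hKposfin y).2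
    have : (μ y ((fun g' => g' * g) '' K)).toReal = Δ g y * (μ y K).toReal := by
      rw [h1, ENNReal.toReal_mul, ENNReal.toReal_ofReal (hΔpos g y hgy).le]
    simp only [hF]
    rw [this]
    field_simp [(ENNReal.toReal_pos hKpos.ne' hKfin.ne).ne']
  -- conclude
  have : (fun p : {p : G × X // p.1 • p.2 = p.2} => (Δ p.1.1 p.1.2) ^ (-(1 / 2) : ℝ)) =
      fun p => (F p.1) ^ (-(1 / 2) : ℝ) := by
    funext p
    rw [hΔF p.1.1 p.1.2 p.2]
  rw [this]
  refine continuous_iff_continuousAt.mpr fun p => ContinuousAt.rpow_const ?_ (Or.inl ?_)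
  · exact (hFcont.comp continuous_subtype_val).continuousAt
  · rw [← hΔF p.1.1 p.1.2 p.2]
    exact (hΔpos p.1.1 p.1.2 p.2).ne'
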